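/- Filter the group G by its lower central series. Then the induced filtration on the group algebra coincides with the I-adic filtration: for every i ≥ 1, F_i K[G] = I^i, where F_i K[G] is the K-linear span of the products (g₁−1)(g₂−1)⋯(g_r−1) with g_t ∈ Γ_{k_t} G and k₁+⋯+k_r ≥ i. In particular, for every k ≥ 1 and every g ∈ Γ_k G one has g − 1 ∈ I^k. -/

import Mathlib

/-- The augmentation map `ε : K[G] → K`, the algebra map sending every group element
to `1`. -/
noncomputable def augmentation (K : Type*) [Field K] (G : Type*) [Group G] :
    MonoidAlgebra K G →ₐ[K] K :=
  MonoidAlgebra.lift K K G 1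

/-- The augmentation ideal `I := ker ε` of the group algebra `K[G]`. -/
noncomputable def augmentationIdeal (K : Type*) [Field K] (G : Type*) [Group G] :
    Ideal (MonoidAlgebra K G) :=
  RingHom.ker (augmentation K G)

/-- The filtration on the group algebra `K[G]` induced by the lower central series of
`G`: `F_i K[G]` is the `K`-linear span of the products `(g₁−1)⋯(g_r−1)` with
`g_t ∈ Γ_{k_t} G` and `k₁ + ⋯ + k_r ≥ i`.  (Here `Γ_k G`, with `Γ₁ G = G`, is
`lowerCentralSeries G (k − 1)`.) -/
noncomputable def lcsFiltration (K : Type*) [Field K] (G : Type*) [Group G] (i : ℕ) :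
    Submodule K (MonoidAlgebra K G) :=
  Submodule.span K
    {x : MonoidAlgebra K G | ∃ (r : ℕ) (k : Fin r → ℕ) (g : Fin r → G),
      (∀ t, 1 ≤ k t ∧ g t ∈ (⊤ : Subgroup G).lowerCentralSeries (k t - 1)) ∧
      i ≤ ∑ t, k t ∧
      x = (List.ofFn fun t => (MonoidAlgebra.of K G (g t) - 1)).prod}

section Aux

variable {K : Type*} [Field K] {G : Type*} [Group G]

lemma aug_of (g : G) : augmentation K G (MonoidAlgebra.of K G g) = 1 := by
  simp [augmentation, MonoidAlgebra.lift_single]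

lemma of_sub_one_mem (g : G) :
    MonoidAlgebra.of K G g - 1 ∈ augmentationIdeal K G := by
  rw [augmentationIdeal, RingHom.mem_ker, map_sub, aug_of, map_one, sub_self]

lemma mem_span_of_mem_aug (x : MonoidAlgebra K G) (hx : x ∈ augmentationIdeal K G) :
    x ∈ Submodule.span K {y : MonoidAlgebra K G | ∃ g : G, MonoidAlgebra.of K G g - 1 = y} := by
  have key : ∀ y : MonoidAlgebra K G,
      y - (algebraMap K (MonoidAlgebra K G)) (augmentation K G y) ∈
      Submodule.span K {y : MonoidAlgebra K G | ∃ g : G, MonoidAlgebra.of K G g - 1 = y} := by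
    intro y
    induction y using MonoidAlgebra.induction_on with
    | of g =>
      have : augmentation K G (MonoidAlgebra.of K G g) = 1 := aug_of g
      rw [this, map_one]
      exact Submodule.subset_span ⟨g, rfl⟩
    | add f h hf hh =>
      have := Submodule.add_mem _ hf hh
      rw [map_add, map_add]
      convert this using 1; abel
    | smul r f hf =>
      have := Submodule.smul_mem _ r hf
      rw [map_smul]
      convert this using 1
      simp [Algebra.smul_def, mul_sub, map_mul, smul_sub]
  have h0 : augmentation K G x = 0 := hx
  have := key x
  rwa [h0, map_zero, sub_zero] at this

lemma aug_mul_mem {x : MonoidAlgebra K G} (hx : x ∈ augmentationIdeal K G)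
    (r : MonoidAlgebra K G) : x * r ∈ augmentationIdeal K G := by
  have hx0 : augmentation K G x = 0 := hx
  show augmentation K G (x * r) = 0
  rw [map_mul, hx0, zero_mul]

lemma pow_aug_mul_mem (k : ℕ) {x : MonoidAlgebra K G}
    (hx : x ∈ augmentationIdeal K G ^ k) (r : MonoidAlgebra K G) :
    x * r ∈ augmentationIdeal K G ^ k := by
  cases k with
  | zero =>
    rw [Submodule.pow_zero, Ideal.one_eq_top]; trivial
  | succ k =>
    rw [Submodule.pow_succ] at hx ⊢
    refine Submodule.mul_induction_on
      (C := fun y => y * r ∈ augmentationIdeal K G ^ k * augmentationIdeal K G) hx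
      (fun a ha b hb => ?_) (fun u v hu hv => ?_)
    · show a * b * r ∈ _
      rw [mul_assoc]
      exact Submodule.mul_mem_mul ha (aug_mul_mem hb r)
    · show (u + v) * r ∈ _
      rw [add_mul]
      exact Submodule.add_mem _ hu hv

lemma mul_mem_pow_add {a b : ℕ} {x y : MonoidAlgebra K G}
    (hx : x ∈ augmentationIdeal K G ^ a) (hy : y ∈ augmentationIdeal K G ^ b) :
    x * y ∈ augmentationIdeal K G ^ (a + b) := by
  induction b generalizing y with
  | zero => exact pow_aug_mul_mem a hx y
  | succ b ih =>
    rw [Submodule.pow_succ] at hy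
    have : x * y ∈ augmentationIdeal K G ^ (a + b) * augmentationIdeal K G := by
      refine Submodule.mul_induction_on
        (C := fun y => x * y ∈ augmentationIdeal K G ^ (a + b) * augmentationIdeal K G) hy
        (fun c hc d hd => ?_) (fun u v hu hv => ?_)
      · show x * (c * d) ∈ _
        rw [← mul_assoc]
        exact Submodule.mul_mem_mul (ih hc) hd
      · show x * (u + v) ∈ _
        rw [mul_add]
        exact Submodule.add_mem _ hu hv
    rw [← Submodule.pow_succ] at this
    exact this

lemma aug_mul_pow_mem (k : ℕ) {x y : MonoidAlgebra K G}
    (hx : x ∈ augmentationIdeal K G) (hy : y ∈ augmentationIdeal K G ^ k) :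
    x * y ∈ augmentationIdeal K G ^ (k + 1) := by
  have h := mul_mem_pow_add (a := 1) (b := k) (by rwa [Submodule.pow_one]) hy
  rwa [Nat.add_comm] at h

lemma pow_le_pow_aug {i j : ℕ} (h : i ≤ j) :
    (augmentationIdeal K G ^ j : Ideal (MonoidAlgebra K G)) ≤ augmentationIdeal K G ^ i := by
  induction j, h using Nat.le_induction with
  | base => exact le_rfl
  | succ j hj ih =>
    intro x hx
    rw [Submodule.pow_succ] at hx
    refine Submodule.mul_induction_on
      (C := fun y => y ∈ augmentationIdeal K G ^ i) hx
      (fun a ha b hb => ?_) (fun u v hu hv => Submodule.add_mem _ hu hv)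
    exact pow_aug_mul_mem i (ih ha) b

lemma mul_sub_one_mem (J : Ideal (MonoidAlgebra K G))
    (hJ : ∀ x ∈ J, ∀ r : MonoidAlgebra K G, x * r ∈ J) (a b : G)
    (ha : MonoidAlgebra.of K G a - 1 ∈ J) (hb : MonoidAlgebra.of K G b - 1 ∈ J) :
    MonoidAlgebra.of K G (a * b) - 1 ∈ J := by
  have : MonoidAlgebra.of K G (a * b) - 1
      = (MonoidAlgebra.of K G a - 1) * (MonoidAlgebra.of K G b - 1)
        + (MonoidAlgebra.of K G a - 1) + (MonoidAlgebra.of K G b - 1) := by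
    rw [map_mul]; noncomm_ring
  rw [this]
  exact J.add_mem (J.add_mem (hJ _ ha _) ha) hb

lemma inv_sub_one_mem (J : Ideal (MonoidAlgebra K G)) (a : G)
    (ha : MonoidAlgebra.of K G a - 1 ∈ J) :
    MonoidAlgebra.of K G a⁻¹ - 1 ∈ J := by
  have key : MonoidAlgebra.of K G a⁻¹ - 1
      = -(MonoidAlgebra.of K G a⁻¹ * (MonoidAlgebra.of K G a - 1)) := by
    rw [mul_sub, ← map_mul]
    have h1 : (MonoidAlgebra.of K G) (a⁻¹ * a) = 1 := by
      rw [inv_mul_cancel a]; exact map_one _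
    rw [h1]; noncomm_ring
  rw [key]
  exact J.neg_mem (J.mul_mem_left _ ha)

lemma lcs_sub_one_mem (k : ℕ) (g : G) (hg : g ∈ (⊤ : Subgroup G).lowerCentralSeries k) :
    MonoidAlgebra.of K G g - 1 ∈ augmentationIdeal K G ^ (k + 1) := by
  induction k generalizing g with
  | zero =>
    rw [Submodule.pow_one]
    exact of_sub_one_mem g
  | succ k ih =>
    rw [Subgroup.mem_lowerCentralSeries_succ_iff] at hg
    induction hg using Subgroup.closure_induction with
    | mem x hx =>
      obtain ⟨p, hp, q, -, rfl⟩ := hx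
      set A := MonoidAlgebra.of K G p with hA
      set B := MonoidAlgebra.of K G q with hB
      have key : MonoidAlgebra.of K G (p * q * p⁻¹ * q⁻¹) - 1
          = ((A - 1) * (B - 1) - (B - 1) * (A - 1)) * MonoidAlgebra.of K G ((q * p)⁻¹) := by
        have h1 : MonoidAlgebra.of K G (p * q) * MonoidAlgebra.of K G ((q * p)⁻¹)
            = MonoidAlgebra.of K G (p * q * p⁻¹ * q⁻¹) := by
          rw [← map_mul]; congr 1; group
        have h2 : MonoidAlgebra.of K G (q * p) * MonoidAlgebra.of K G ((q * p)⁻¹) = 1 := by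
          rw [← map_mul, mul_inv_cancel (q * p)]; exact map_one _
        have h3 : (A - 1) * (B - 1) - (B - 1) * (A - 1)
            = MonoidAlgebra.of K G (p * q) - MonoidAlgebra.of K G (q * p) := by
          rw [hA, hB, map_mul, map_mul]; noncomm_ring
        rw [h3, sub_mul, h1, h2]
      rw [commutatorElement_def, key]
      refine pow_aug_mul_mem _ ?_ _
      apply Submodule.sub_mem
      · rw [Submodule.pow_succ]
        exact Submodule.mul_mem_mul (ih p hp) (of_sub_one_mem q)
      · exact aug_mul_pow_mem _ (of_sub_one_mem q) (ih p hp)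
    | one =>
      have h1 : (MonoidAlgebra.of K G (1 : G) : MonoidAlgebra K G) = 1 := map_one _
      rw [h1, sub_self]; exact Submodule.zero_mem _
    | mul x y _ _ hx hy =>
      exact mul_sub_one_mem _ (fun x hx r => pow_aug_mul_mem _ hx r) x y hx hy
    | inv x _ hx => exact inv_sub_one_mem _ x hx

lemma prod_mem_pow (r : ℕ) (k : Fin r → ℕ) (g : Fin r → G)
    (h : ∀ t, 1 ≤ k t ∧ g t ∈ (⊤ : Subgroup G).lowerCentralSeries (k t - 1)) :
    (List.ofFn fun t => (MonoidAlgebra.of K G (g t) - 1)).prod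
      ∈ augmentationIdeal K G ^ (∑ t, k t) := by
  induction r with
  | zero =>
    have h1 : (List.ofFn fun t : Fin 0 => (MonoidAlgebra.of K G (g t) - 1)).prod = 1 := by
      simp
    have h2 : ∑ t : Fin 0, k t = 0 := by simp
    rw [h1, h2, Submodule.pow_zero, Ideal.one_eq_top]
    trivial
  | succ r ih =>
    have h1 : (List.ofFn fun t : Fin (r + 1) => (MonoidAlgebra.of K G (g t) - 1)).prod
        = (MonoidAlgebra.of K G (g 0) - 1)
          * (List.ofFn fun s : Fin r => (MonoidAlgebra.of K G (g s.succ) - 1)).prod := by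
      rw [List.ofFn_succ, List.prod_cons]
    have h2 : ∑ t : Fin (r + 1), k t = k 0 + ∑ s : Fin r, k s.succ := Fin.sum_univ_succ _
    rw [h1, h2]
    have h0 := lcs_sub_one_mem (K := K) (k 0 - 1) (g 0) (h 0).2
    rw [Nat.sub_add_cancel (h 0).1] at h0
    exact mul_mem_pow_add h0 (ih (fun s => k s.succ) (fun s => g s.succ) (fun s => h s.succ))

lemma one_sub_gen (g : G) :
    (MonoidAlgebra.of K G g - 1 : MonoidAlgebra K G) ∈ lcsFiltration K G 1 := by
  refine Submodule.subset_span ⟨1, fun _ => 1, fun _ => g, ?_, ?_, ?_⟩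
  · intro t
    refine ⟨le_rfl, ?_⟩
    show g ∈ (⊤ : Subgroup G).lowerCentralSeries 0
    rw [Subgroup.lowerCentralSeries_zero]
    trivial
  · simp
  · simp

lemma mul_gen_mem (i : ℕ) (g : G) {b : MonoidAlgebra K G} (hb : b ∈ lcsFiltration K G i) :
    b * (MonoidAlgebra.of K G g - 1) ∈ lcsFiltration K G (i + 1) := by
  refine Submodule.span_induction
    (p := fun b _ => b * (MonoidAlgebra.of K G g - 1) ∈ lcsFiltration K G (i + 1))
    ?_ ?_ ?_ ?_ hb
  · rintro x ⟨r, k, g', hc, hs, rfl⟩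
    refine Submodule.subset_span
      ⟨r + 1, Fin.snoc k 1, Fin.snoc g' g, ?_, ?_, ?_⟩
    · intro t
      refine Fin.lastCases ?_ ?_ t
      · rw [Fin.snoc_last, Fin.snoc_last]
        refine ⟨le_rfl, ?_⟩
        show g ∈ (⊤ : Subgroup G).lowerCentralSeries 0
        rw [Subgroup.lowerCentralSeries_zero]
        trivial
      · intro s
        rw [Fin.snoc_castSucc, Fin.snoc_castSucc]
        exact hc s
    · rw [Fin.sum_univ_castSucc]
      simp only [Fin.snoc_castSucc, Fin.snoc_last]
      omega
    · rw [List.ofFn_succ']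
      simp only [Fin.snoc_castSucc, Fin.snoc_last, List.concat_eq_append,
        List.prod_append, List.prod_cons, List.prod_nil, mul_one]
  · show (0 : MonoidAlgebra K G) * (MonoidAlgebra.of K G g - 1) ∈ lcsFiltration K G (i + 1)
    rw [zero_mul]; exact Submodule.zero_mem _
  · intro x y _ _ hx hy
    show (x + y) * _ ∈ _
    rw [add_mul]; exact Submodule.add_mem _ hx hy
  · intro a x _ hx
    show (a • x) * _ ∈ _
    rw [smul_mul_assoc]; exact Submodule.smul_mem _ _ hx

lemma filtration_mul_aug (i : ℕ) {a b : MonoidAlgebra K G}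
    (ha : a ∈ lcsFiltration K G i) (hb : b ∈ augmentationIdeal K G) :
    a * b ∈ lcsFiltration K G (i + 1) := by
  have hb' := mem_span_of_mem_aug b hb
  refine Submodule.span_induction
    (p := fun b _ => a * b ∈ lcsFiltration K G (i + 1)) ?_ ?_ ?_ ?_ hb'
  · rintro x ⟨g, rfl⟩
    exact mul_gen_mem i g ha
  · show a * 0 ∈ _
    rw [mul_zero]; exact Submodule.zero_mem _
  · intro x y _ _ hx hy
    show a * (x + y) ∈ _
    rw [mul_add]; exact Submodule.add_mem _ hx hy
  · intro c x _ hx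
    show a * (c • x) ∈ _
    rw [mul_smul_comm]; exact Submodule.smul_mem _ _ hx

end Aux

/-- Let `K` be a field of characteristic `0` and `G` a group, filtered
by its lower central series.  Then the induced filtration on the group algebra
coincides with the `I`-adic filtration: `F_i K[G] = I^i` for every `i ≥ 1`.  In
particular, for every `k ≥ 1` and every `g ∈ Γ_k G` one has `g − 1 ∈ I^k`. -/
theorem lcsFiltration_eq_pow_augmentationIdeal
    (K : Type*) [Field K] [CharZero K] (G : Type*) [Group G] :
    (∀ i : ℕ, 1 ≤ i →
      lcsFiltration K G i
        = (augmentationIdeal K G ^ i).restrictScalars K) ∧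
    (∀ k : ℕ, 1 ≤ k → ∀ g ∈ (⊤ : Subgroup G).lowerCentralSeries (k - 1),
      (MonoidAlgebra.of K G g - 1 : MonoidAlgebra K G)
        ∈ augmentationIdeal K G ^ k) := by
  constructor
  · intro i hi
    apply le_antisymm
    · rw [lcsFiltration, Submodule.span_le]
      rintro x ⟨r, k, g, hc, hs, rfl⟩
      exact pow_le_pow_aug hs (prod_mem_pow r k g hc)
    · induction i, hi using Nat.le_induction with
      | base =>
        intro x hx
        have hx' : x ∈ augmentationIdeal K G := by
          rwa [Submodule.restrictScalars_mem, Submodule.pow_one] at hx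
        have hsp := mem_span_of_mem_aug x hx'
        refine Submodule.span_le.mpr ?_ hsp
        rintro y ⟨g, rfl⟩
        exact one_sub_gen g
      | succ i hi ih =>
        intro x hx
        have hx' : x ∈ augmentationIdeal K G ^ i * augmentationIdeal K G := by
          rw [Submodule.restrictScalars_mem, Submodule.pow_succ] at hx
          exact hx
        refine Submodule.mul_induction_on
          (C := fun y => y ∈ lcsFiltration K G (i + 1)) hx'
          (fun a ha b hb => ?_) (fun u v hu hv => Submodule.add_mem _ hu hv)
        exact filtration_mul_aug i (ih ha) hb
  · intro k hk g hg
    have := lcs_sub_one_mem (K := K) (k - 1) g hg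
    rwa [Nat.sub_add_cancel hk] at this
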